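/- arXiv:2408.10875 — 4 statements merged into one kernel-verified Lean document; each statement's English description precedes it below -/
import Mathlib

section
/- Let I be a standard dyadic partition of [0,1]. For any A ∈ S(I) with A ≠ [0,1], the interval A ∪ Ā (the union of A with its conjugate) belongs to S(I). -/
/-- `IsSD l r` means `[l, r]` is a standard dyadic interval
`[k/2^m, (k+1)/2^m] ⊆ [0,1]` with `m ≥ 0`, `0 ≤ k ≤ 2^m - 1`. -/
def IsSD (l r : ℚ) : Prop :=
  ∃ m k : ℕ, k < 2 ^ m ∧ l = (k : ℚ) / 2 ^ m ∧ r = ((k : ℚ) + 1) / 2 ^ m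

/-- A left standard dyadic interval: `[k/2^m, (k+1)/2^m]` with `m ≥ 1` and `k` even. -/
def IsLeftSD (l r : ℚ) : Prop :=
  ∃ m k : ℕ, 1 ≤ m ∧ k < 2 ^ m ∧ Even k ∧
    l = (k : ℚ) / 2 ^ m ∧ r = ((k : ℚ) + 1) / 2 ^ m

/-- A right standard dyadic interval: `[k/2^m, (k+1)/2^m]` with `m ≥ 1` and `k` odd;
by convention `[0,1]` is also regarded as a right standard dyadic interval. -/
def IsRightSD (l r : ℚ) : Prop :=
  (l = 0 ∧ r = 1) ∨
    ∃ m k : ℕ, 1 ≤ m ∧ k < 2 ^ m ∧ Odd k ∧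
      l = (k : ℚ) / 2 ^ m ∧ r = ((k : ℚ) + 1) / 2 ^ m

/-- The set `S` of all standard dyadic intervals, an interval `[l, r]` being
represented by the pair `(l, r)` of its endpoints. -/
def SDSet : Set (ℚ × ℚ) := {A | IsSD A.1 A.2}

/-- The conjugate `Ā` of a standard dyadic interval `A ≠ [0,1]`:
the adjacent standard dyadic interval of the same length, on the right of `A`
if `A` is left, and on the left of `A` if `A` is right. -/
noncomputable def conjSD (A : ℚ × ℚ) : ℚ × ℚ := by
  classical
  exact if IsLeftSD A.1 A.2 then (A.2, 2 * A.2 - A.1) else (2 * A.1 - A.2, A.1)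

/-- The union of two overlapping or adjacent closed intervals, as an interval:
from the smaller left endpoint to the larger right endpoint.  In particular
`sdJoin A (conjSD A)` represents the interval `A ∪ Ā`. -/
def sdJoin (A B : ℚ × ℚ) : ℚ × ℚ := (min A.1 B.1, max A.2 B.2)

/-- A standard dyadic `n`-partition of `[0,1]`: breakpoints
`0 = a_0 < a_1 < ... < a_n = 1` with every `[a_i, a_{i+1}]` a standard dyadic
interval. -/
structure SDPartition (n : ℕ) where
  pts : Fin (n + 1) → ℚ
  first : pts 0 = 0
  last : pts (Fin.last n) = 1
  mono : StrictMono pts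
  sd : ∀ i : Fin n, IsSD (pts i.castSucc) (pts i.succ)

/-- `S(I)`: the set of intervals `[a_i, a_j]` (`i < j`) with endpoints breakpoints
of `I` that are standard dyadic intervals. -/
def SIn {n : ℕ} (I : SDPartition n) : Set (ℚ × ℚ) :=
  {A | (∃ i j : Fin (n + 1), i < j ∧ A = (I.pts i, I.pts j)) ∧ IsSD A.1 A.2}

/-- The midpoint of an interval. -/
def midQ (A : ℚ × ℚ) : ℚ := (A.1 + A.2) / 2

/-- The length of an interval. -/
def lenQ (A : ℚ × ℚ) : ℚ := A.2 - A.1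

/-- `E`: the set of dyadic rationals strictly between 0 and 1. -/
def Edyadic : Set ℚ := {q | ∃ m k : ℕ, 1 ≤ k ∧ k < 2 ^ m ∧ q = (k : ℚ) / 2 ^ m}

/-- `S_L(I) = S(I) ∩ S_L`. -/
def SLIn {n : ℕ} (I : SDPartition n) : Set (ℚ × ℚ) := {A ∈ SIn I | IsLeftSD A.1 A.2}

/-- `S_R(I) = S(I) ∩ S_R`. -/
def SRIn {n : ℕ} (I : SDPartition n) : Set (ℚ × ℚ) := {A ∈ SIn I | IsRightSD A.1 A.2}

/-- `M(I)`: the set of midpoints of the subintervals of `I`. -/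
def MIn {n : ℕ} (I : SDPartition n) : Set ℚ :=
  {q | ∃ i : Fin n, q = midQ (I.pts i.castSucc, I.pts i.succ)}

/-- `E(I)`: the union of `M(I)` with the breakpoints of `I` other than 0 and 1. -/
def EIn {n : ℕ} (I : SDPartition n) : Set ℚ :=
  MIn I ∪ {q | (∃ i : Fin (n + 1), I.pts i = q) ∧ q ≠ 0 ∧ q ≠ 1}

-- nat-level core lemmas
lemma natA {m p k j : ℕ} (h1 : k * 2^p < j * 2^m) (h2 : j * 2^m < (k+1) * 2^p) :
    (j+1) * 2^m ≤ (k+1) * 2^p := by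
  rcases le_or_gt p m with h | h
  · obtain ⟨q, rfl⟩ := Nat.exists_eq_add_of_le h
    rw [pow_add] at h1 h2
    have hP : 0 < 2^p := Nat.pow_pos (n := p) (by norm_num)
    have e1 : k < j * 2^q := by
      have : k * 2^p < (j * 2^q) * 2^p := by ring_nf at h1 ⊢; linarith
      exact Nat.lt_of_mul_lt_mul_right this
    have e2 : j * 2^q < k + 1 := by
      have : (j * 2^q) * 2^p < (k+1) * 2^p := by ring_nf at h2 ⊢; linarith
      exact Nat.lt_of_mul_lt_mul_right this
    omega
  · obtain ⟨q, rfl⟩ := Nat.exists_eq_add_of_le h.le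
    rw [pow_add] at h2 ⊢
    have hM : 0 < 2^m := Nat.pow_pos (n := m) (by norm_num)
    have e2 : j < (k+1) * 2^q := by
      have : j * 2^m < ((k+1) * 2^q) * 2^m := by ring_nf at h2 ⊢; linarith
      exact Nat.lt_of_mul_lt_mul_right this
    calc (j+1) * 2^m ≤ ((k+1) * 2^q) * 2^m := Nat.mul_le_mul_right _ (by omega)
      _ = (k+1) * (2^m * 2^q) := by ring

lemma natA' {m p k j : ℕ} (h1 : k * 2^p < (j+1) * 2^m) (h2 : (j+1) * 2^m < (k+1) * 2^p) :
    k * 2^p ≤ j * 2^m := by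
  rcases le_or_gt p m with h | h
  · obtain ⟨q, rfl⟩ := Nat.exists_eq_add_of_le h
    rw [pow_add] at h1 h2
    have e1 : k < (j+1) * 2^q := by
      have : k * 2^p < ((j+1) * 2^q) * 2^p := by ring_nf at h1 ⊢; linarith
      exact Nat.lt_of_mul_lt_mul_right this
    have e2 : (j+1) * 2^q < k + 1 := by
      have : ((j+1) * 2^q) * 2^p < (k+1) * 2^p := by ring_nf at h2 ⊢; linarith
      exact Nat.lt_of_mul_lt_mul_right this
    omega
  · obtain ⟨q, rfl⟩ := Nat.exists_eq_add_of_le h.le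
    rw [pow_add] at h1 ⊢
    have e1 : k * 2^q < j + 1 := by
      have : (k * 2^q) * 2^m < (j+1) * 2^m := by ring_nf at h1 ⊢; linarith
      exact Nat.lt_of_mul_lt_mul_right this
    calc k * (2^m * 2^q) = (k * 2^q) * 2^m := by ring
      _ ≤ j * 2^m := Nat.mul_le_mul_right _ (by omega)

lemma natB {m p u j : ℕ} (hu : Odd u) (h : j * 2^m = u * 2^p) :
    ∃ q, p = m + q ∧ j = u * 2^q := by
  rcases le_or_gt m p with hh | hh
  · obtain ⟨q, rfl⟩ := Nat.exists_eq_add_of_le hh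
    refine ⟨q, rfl, ?_⟩
    rw [pow_add] at h
    have hM : 0 < 2^m := Nat.pow_pos (n := m) (by norm_num)
    have : j * 2^m = (u * 2^q) * 2^m := by rw [h]; ring
    exact Nat.eq_of_mul_eq_mul_right hM this
  · exfalso
    obtain ⟨q, hq⟩ := Nat.exists_eq_add_of_le hh.le
    have hq1 : 1 ≤ q := by omega
    rw [hq, pow_add] at h
    have hP : 0 < 2^p := Nat.pow_pos (n := p) (by norm_num)
    have : (j * 2^q) * 2^p = u * 2^p := by rw [← h]; ring
    have hju : j * 2^q = u := Nat.eq_of_mul_eq_mul_right hP this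
    have : 2 ∣ u := ⟨j * 2^(q-1), by rw [← hju]; rcases Nat.exists_eq_add_of_le hq1 with ⟨r, rfl⟩; simp [pow_add, pow_succ]; ring⟩
    rw [Nat.odd_iff] at hu; omega

lemma qlt {a b p q : ℕ} : (a:ℚ)/2^p < (b:ℚ)/2^q ↔ a * 2^q < b * 2^p := by
  rw [div_lt_div_iff₀ (by positivity) (by positivity)]
  exact_mod_cast Iff.rfl

lemma qle {a b p q : ℕ} : (a:ℚ)/2^p ≤ (b:ℚ)/2^q ↔ a * 2^q ≤ b * 2^p := by
  rw [div_le_div_iff₀ (by positivity) (by positivity)]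
  exact_mod_cast Iff.rfl

lemma qeq {a b p q : ℕ} : (a:ℚ)/2^p = (b:ℚ)/2^q ↔ a * 2^q = b * 2^p := by
  rw [div_eq_div_iff (by positivity) (by positivity)]
  exact_mod_cast Iff.rfl

/-- strictly-inside lemma: an s.d. interval whose left endpoint lies strictly inside
`[k/2^m, (k+1)/2^m]` has right endpoint `≤ (k+1)/2^m`. -/
lemma lemA {m p k j : ℕ} (h1 : (k:ℚ)/2^m < (j:ℚ)/2^p) (h2 : (j:ℚ)/2^p < ((k:ℚ)+1)/2^m) :
    ((j:ℚ)+1)/2^p ≤ ((k:ℚ)+1)/2^m := by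
  have h2' : (j:ℚ)/2^p < ((k+1:ℕ):ℚ)/2^m := by push_cast; exact h2
  have := natA (qlt.mp h1) (qlt.mp h2')
  have : ((j+1:ℕ):ℚ)/2^p ≤ ((k+1:ℕ):ℚ)/2^m := qle.mpr this
  push_cast at this; exact this

lemma lemA' {m p k j : ℕ} (h1 : (k:ℚ)/2^m < ((j:ℚ)+1)/2^p) (h2 : ((j:ℚ)+1)/2^p < ((k:ℚ)+1)/2^m) :
    (k:ℚ)/2^m ≤ (j:ℚ)/2^p := by
  have h1' : (k:ℚ)/2^m < ((j+1:ℕ):ℚ)/2^p := by push_cast; exact h1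
  have h2' : ((j+1:ℕ):ℚ)/2^p < ((k+1:ℕ):ℚ)/2^m := by push_cast; exact h2
  exact qle.mpr (natA' (qlt.mp h1') (qlt.mp h2'))

/-- odd-start lemma -/
lemma lemB {m p u j : ℕ} (hu : Odd u) (h : (j:ℚ)/2^p = (u:ℚ)/2^m) :
    ((j:ℚ)+1)/2^p ≤ ((u:ℚ)+1)/2^m := by
  obtain ⟨q, rfl, rfl⟩ := natB hu (qeq.mp h)
  have : ((u * 2^q + 1 : ℕ):ℚ)/2^(m+q) ≤ ((u+1:ℕ):ℚ)/2^m := by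
    refine qle.mpr ?_
    have h2q : 1 ≤ 2^q := Nat.one_le_two_pow
    calc (u * 2^q + 1) * 2^m ≤ (u * 2^q + 2^q) * 2^m := by
          exact Nat.mul_le_mul_right _ (by omega)
      _ = (u+1) * 2^(m+q) := by rw [pow_add]; ring
  push_cast at this ⊢; exact this

/-- odd-end lemma -/
lemma lemB' {m p u j : ℕ} (hu : Odd u) (h : ((j:ℚ)+1)/2^p = (u:ℚ)/2^m) :
    ((u:ℚ)-1)/2^m ≤ (j:ℚ)/2^p := by
  have h' : ((j+1:ℕ):ℚ)/2^p = (u:ℚ)/2^m := by push_cast; exact h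
  obtain ⟨q, rfl, hj⟩ := natB hu (qeq.mp h')
  have hu1 : 1 ≤ u := hu.pos
  have h2q : 1 ≤ 2^q := Nat.one_le_two_pow
  have : ((u - 1 : ℕ):ℚ)/2^m ≤ (j:ℚ)/2^(m+q) := by
    refine qle.mpr ?_
    calc (u-1) * 2^(m+q) = ((u-1) * 2^q) * 2^m := by rw [pow_add]; ring
      _ ≤ j * 2^m := Nat.mul_le_mul_right _ (by
          have : (u-1) * 2^q = u * 2^q - 2^q := by
            rcases Nat.exists_eq_add_of_le hu1 with ⟨r, rfl⟩; simp [Nat.add_mul]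
          omega)
  have hc : ((u - 1 : ℕ):ℚ) = (u:ℚ) - 1 := by
    push_cast [Nat.cast_sub hu1]; ring
  rwa [hc] at this

lemma sd_unique {m m' k k' : ℕ} (h1 : (k:ℚ)/2^m = (k':ℚ)/2^m')
    (h2 : ((k:ℚ)+1)/2^m = ((k':ℚ)+1)/2^m') : m = m' ∧ k = k' := by
  have hpm : (0:ℚ) < 2^m := by positivity
  have hpm' : (0:ℚ) < 2^m' := by positivity
  have hpow : (2:ℚ)^m' = 2^m := by
    field_simp at h1 h2
    linarith
  have hm : m = m' := by
    have hn : (2^m' : ℕ) = 2^m := by exact_mod_cast hpow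
    exact (Nat.pow_right_injective le_rfl hn).symm
  subst hm
  refine ⟨rfl, ?_⟩
  have : (k:ℚ) = k' := by field_simp at h1; exact_mod_cast h1
  exact_mod_cast this

lemma find_up {n : ℕ} (I : SDPartition n) (j : Fin (n+1)) (d : ℚ) (hd : d ≤ 1)
    (hj : I.pts j < d)
    (key : ∀ t : Fin n, I.pts j ≤ I.pts t.castSucc → I.pts t.castSucc < d →
      I.pts t.succ ≤ d) :
    ∃ t, j < t ∧ I.pts t = d := by
  classical
  have hne : (Finset.univ.filter (fun t : Fin (n+1) => d ≤ I.pts t)).Nonempty :=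
    ⟨Fin.last n, by simp [I.last, hd]⟩
  set t0 := Finset.min' _ hne with ht0def
  have ht0 : d ≤ I.pts t0 := (Finset.mem_filter.mp (Finset.min'_mem _ hne)).2
  have hmin : ∀ s, d ≤ I.pts s → t0 ≤ s := fun s hs =>
    Finset.min'_le _ _ (by simp [hs])
  have hjt : j < t0 := by
    by_contra h
    push_neg at h
    exact absurd (lt_of_le_of_lt (I.mono.monotone h) hj) (not_lt.mpr ht0)
  obtain ⟨s, hs⟩ := Fin.eq_succ_of_ne_zero (Fin.pos_iff_ne_zero.mp (lt_of_le_of_lt (Fin.zero_le j) hjt))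
  have h1 : I.pts s.castSucc < d := by
    by_contra h
    push_neg at h
    have := hmin _ h
    rw [hs] at this
    exact absurd (lt_of_le_of_lt this (Fin.castSucc_lt_succ (i := s))) (lt_irrefl _)
  have h2 : j ≤ s.castSucc := by
    have : j < s.succ := hs ▸ hjt
    simp [Fin.lt_def, Fin.le_def] at this ⊢
    omega
  have := key s (I.mono.monotone h2) h1
  exact ⟨s.succ, hs ▸ hjt, le_antisymm this (hs ▸ ht0)⟩

lemma find_down {n : ℕ} (I : SDPartition n) (i : Fin (n+1)) (c : ℚ) (hc : 0 ≤ c)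
    (hi : c < I.pts i)
    (key : ∀ t : Fin n, I.pts t.succ ≤ I.pts i → c < I.pts t.succ →
      c ≤ I.pts t.castSucc) :
    ∃ t, t < i ∧ I.pts t = c := by
  classical
  have hne : (Finset.univ.filter (fun t : Fin (n+1) => I.pts t ≤ c)).Nonempty :=
    ⟨0, by simp [I.first, hc]⟩
  set t0 := Finset.max' _ hne with ht0def
  have ht0 : I.pts t0 ≤ c := (Finset.mem_filter.mp (Finset.max'_mem _ hne)).2
  have hmax : ∀ s, I.pts s ≤ c → s ≤ t0 := fun s hs =>
    Finset.le_max' _ _ (by simp [hs])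
  have hti : t0 < i := by
    by_contra h
    push_neg at h
    exact absurd (lt_of_lt_of_le hi (I.mono.monotone h)) (not_lt.mpr ht0)
  have htlast : t0 ≠ Fin.last n := by
    intro h
    exact absurd (lt_of_lt_of_le hti (Fin.le_last i)) (h ▸ lt_irrefl _)
  obtain ⟨s, hs⟩ := Fin.exists_castSucc_eq.mpr htlast
  have hs := hs.symm
  have h1 : c < I.pts s.succ := by
    by_contra h
    push_neg at h
    have := hmax _ h
    rw [hs] at this
    exact absurd (lt_of_lt_of_le (Fin.castSucc_lt_succ (i := s)) this) (lt_irrefl _)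
  have h2 : s.succ ≤ i := by
    have : s.castSucc < i := hs ▸ hti
    simp [Fin.lt_def, Fin.le_def] at this ⊢
    omega
  have := key s (I.mono.monotone h2) h1
  exact ⟨s.castSucc, hs ▸ hti, le_antisymm (hs ▸ ht0) this⟩


/-- for a standard dyadic partition `I` and `A ∈ S(I)` with
`A ≠ [0,1]`, the interval `A ∪ Ā` belongs to `S(I)`. -/
theorem statement_0 {n : ℕ} (I : SDPartition n) (A : ℚ × ℚ)
    (hA : A ∈ SIn I) (hne : A ≠ ((0 : ℚ), (1 : ℚ))) :
    sdJoin A (conjSD A) ∈ SIn I := by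
  obtain ⟨⟨i, j, hij, hAeq⟩, hsd⟩ := hA
  subst hAeq
  obtain ⟨m, k, hk, hl, hr⟩ := hsd
  simp only [Prod.fst, Prod.snd] at hl hr
  have hijq : I.pts i < I.pts j := I.mono hij
  rcases m with _ | m'
  · -- m = 0 : then A = (0,1), contradiction
    exfalso
    apply hne
    have hk0 : k = 0 := by simpa using hk
    subst hk0
    norm_num at hl hr
    rw [Prod.mk.injEq]
    exact ⟨hl, hr⟩
  · have hpos : (0:ℚ) < 2^(m'+1) := by positivity
    rcases Nat.even_or_odd k with hev | hodd
    · -- LEFT case : k even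
      have hLeft : IsLeftSD (I.pts i, I.pts j).1 (I.pts i, I.pts j).2 :=
        ⟨m'+1, k, Nat.le_add_left 1 m', hk, hev, hl, hr⟩
      obtain ⟨k', hk'⟩ := hev
      have hk'lt : k' < 2^m' := by
        rw [pow_succ] at hk; omega
      have hconj : conjSD (I.pts i, I.pts j) = (I.pts j, 2 * I.pts j - I.pts i) := by
        simp [conjSD, if_pos hLeft]
      have hjoin : sdJoin (I.pts i, I.pts j) (conjSD (I.pts i, I.pts j))
          = (I.pts i, 2 * I.pts j - I.pts i) := by
        rw [hconj]
        simp only [sdJoin]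
        rw [min_eq_left hijq.le, max_eq_right (by linarith : I.pts j ≤ 2 * I.pts j - I.pts i)]
      set d : ℚ := ((k:ℚ)+2)/2^(m'+1) with hdval
      have hd2 : 2 * I.pts j - I.pts i = d := by rw [hl, hr, hdval]; ring
      have hd1 : d ≤ 1 := by
        rw [hdval, div_le_one hpos]
        have : (k:ℚ) + 2 ≤ ((2^(m'+1) : ℕ) : ℚ) := by
          have hn : k + 2 ≤ 2^(m'+1) := by rw [pow_succ] at hk ⊢; omega
          exact_mod_cast hn
        simpa using this
      have hjd : I.pts j < d := by
        rw [hr, hdval, div_lt_div_iff₀ hpos hpos]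
        nlinarith
      obtain ⟨t, hjt, hts⟩ := find_up I j d hd1 hjd (by
        intro t hge hlt
        obtain ⟨p, a, hap, hal, har⟩ := I.sd t
        rcases eq_or_lt_of_le hge with heq | hlt2
        · -- the interval starts exactly at pts j = (k+1)/2^(m'+1), odd numerator
          have hstart : (a:ℚ)/2^p = ((k+1:ℕ):ℚ)/2^(m'+1) := by
            rw [← hal, ← heq, hr]; push_cast; ring
          have hb := lemB (m := m'+1) (p := p) (u := k+1) (j := a)
            ⟨k', by omega⟩ hstart
          rw [har, hdval]
          push_cast at hb ⊢
          ring_nf at hb ⊢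
          linarith
        · -- the interval starts strictly inside ((k+1)/2^M, (k+2)/2^M)
          have h1 : ((k+1:ℕ):ℚ)/2^(m'+1) < (a:ℚ)/2^p := by
            rw [← hal]; push_cast; rw [← hr]; exact hlt2
          have h2 : (a:ℚ)/2^p < (((k+1:ℕ):ℚ)+1)/2^(m'+1) := by
            rw [← hal]; push_cast
            have : ((k:ℚ)+1+1) = (k:ℚ)+2 := by ring
            rw [this, ← hdval]; exact hlt
          have hb := lemA h1 h2
          rw [har, hdval]
          push_cast at hb ⊢
          ring_nf at hb ⊢
          linarith)
      rw [hjoin, hd2]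
      refine ⟨⟨i, t, lt_trans hij hjt, by rw [hts]⟩, ?_⟩
      refine ⟨m', k', hk'lt, ?_, ?_⟩
      · show I.pts i = (k':ℚ)/2^m'
        rw [hl, hk']
        push_cast
        rw [pow_succ]
        field_simp
        ring
      · show d = ((k':ℚ)+1)/2^m'
        rw [hdval, hk']
        push_cast
        rw [pow_succ]
        field_simp
        ring
    · -- RIGHT case : k odd
      have hNotLeft : ¬ IsLeftSD (I.pts i, I.pts j).1 (I.pts i, I.pts j).2 := by
        rintro ⟨m2, k2, hm2, hk2, hev2, hl2, hr2⟩
        simp only [Prod.fst, Prod.snd] at hl2 hr2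
        obtain ⟨hmeq, hkeq⟩ := sd_unique (hl ▸ hl2 : (k:ℚ)/2^(m'+1) = (k2:ℚ)/2^m2)
          (hr ▸ hr2 : ((k:ℚ)+1)/2^(m'+1) = ((k2:ℚ)+1)/2^m2)
        rw [Nat.odd_iff] at hodd
        rcases hev2 with ⟨r, hr2'⟩
        omega
      obtain ⟨k', hk'⟩ := hodd
      have hodd' : Odd k := ⟨k', hk'⟩
      have hk'lt : k' < 2^m' := by rw [pow_succ] at hk; omega
      have hconj : conjSD (I.pts i, I.pts j) = (2 * I.pts i - I.pts j, I.pts i) := by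
        simp [conjSD, if_neg hNotLeft]
      have hjoin : sdJoin (I.pts i, I.pts j) (conjSD (I.pts i, I.pts j))
          = (2 * I.pts i - I.pts j, I.pts j) := by
        rw [hconj]
        simp only [sdJoin]
        rw [min_eq_right (by linarith : 2 * I.pts i - I.pts j ≤ I.pts i),
          max_eq_left hijq.le]
      set c : ℚ := ((k:ℚ)-1)/2^(m'+1) with hcval
      have hc2 : 2 * I.pts i - I.pts j = c := by rw [hl, hr, hcval]; ring
      have hc0 : 0 ≤ c := by
        rw [hcval]
        apply div_nonneg _ hpos.le
        have : (1:ℚ) ≤ (k:ℚ) := by exact_mod_cast Nat.one_le_iff_ne_zero.mpr (by omega)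
        linarith
      have hci : c < I.pts i := by
        rw [hl, hcval, div_lt_div_iff₀ hpos hpos]
        nlinarith
      have hcnat : c = ((k-1:ℕ):ℚ)/2^(m'+1) := by
        rw [hcval]
        congr 1
        have : (1:ℕ) ≤ k := by omega
        push_cast [Nat.cast_sub this]
        ring
      obtain ⟨t, hti, hts⟩ := find_down I i c hc0 hci (by
        intro t hle hgt
        obtain ⟨p, a, hap, hal, har⟩ := I.sd t
        rcases eq_or_lt_of_le hle with heq | hlt2
        · -- the interval ends exactly at pts i = k/2^(m'+1), odd numerator
          have hend : ((a:ℚ)+1)/2^p = (k:ℚ)/2^(m'+1) := by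
            rw [← har, heq, hl]
          have hb := lemB' (m := m'+1) (p := p) (u := k) (j := a) hodd' hend
          rw [hal, hcval]
          exact hb
        · -- the interval ends strictly inside ((k-1)/2^M, k/2^M)
          have h1 : ((k-1:ℕ):ℚ)/2^(m'+1) < ((a:ℚ)+1)/2^p := by
            rw [← har, ← hcnat]; exact hgt
          have h2 : ((a:ℚ)+1)/2^p < (((k-1:ℕ):ℚ)+1)/2^(m'+1) := by
            rw [← har]
            have hc1 : ((k-1:ℕ):ℚ)+1 = (k:ℚ) := by
              have : (1:ℕ) ≤ k := by omega
              push_cast [Nat.cast_sub this]; ring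
            rw [hc1, ← hl]
            exact hlt2
          have hb := lemA' h1 h2
          rw [hal, hcnat]
          exact hb)
      rw [hjoin, hc2]
      refine ⟨⟨t, j, lt_trans hti hij, by rw [hts]⟩, ?_⟩
      refine ⟨m', k', hk'lt, ?_, ?_⟩
      · show c = (k':ℚ)/2^m'
        rw [hcval, hk']
        push_cast
        rw [pow_succ]
        field_simp
        ring
      · show I.pts j = ((k':ℚ)+1)/2^m'
        rw [hr, hk']
        push_cast
        rw [pow_succ]
        field_simp
        ring
end

section
/- Let I be a standard dyadic partition of [0,1]. If B ∈ S(I) is not a subinterval of I (i.e., B is not of the form [a_i, a_{i+1}] for consecutive breakpoints), then there exists A ∈ S(I) with A ≠ [0,1] such that B = A ∪ Ā. -/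
lemma sd_no_cross {l r l' r' : ℚ} (hB : IsSD l r) (hD : IsSD l' r')
    (h1 : l ≤ l') (h2 : r' ≤ r) (hlen : r' - l' < r - l) :
    r' ≤ (l + r) / 2 ∨ (l + r) / 2 ≤ l' := by
  obtain ⟨m, k, hk, hl, hr⟩ := hB
  obtain ⟨a, p, hp, hl', hr'⟩ := hD
  subst hl hr hl' hr'
  have h2m : (0:ℚ) < 2 ^ m := by positivity
  have h2a : (0:ℚ) < 2 ^ a := by positivity
  have hma : m < a := by
    have e1 : ((p:ℚ)+1)/2^a - (p:ℚ)/2^a = 1/2^a := by field_simp; ring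
    have e2 : ((k:ℚ)+1)/2^m - (k:ℚ)/2^m = 1/2^m := by field_simp; ring
    have hlen' : (1:ℚ)/2^a < 1/2^m := by linarith
    have hpow : (2:ℚ)^m < 2^a := by
      by_contra hcon
      push_neg at hcon
      have := one_div_le_one_div_of_le h2a hcon
      linarith
    have : (2:ℕ)^m < 2^a := by exact_mod_cast hpow
    exact (Nat.pow_lt_pow_iff_right (by norm_num)).mp this
  by_contra hcon
  push_neg at hcon
  obtain ⟨hc1, hc2⟩ := hcon
  have hcval : ((k:ℚ)/2^m + (((k:ℚ)+1)/2^m))/2 = (2*(k:ℚ)+1)/2^(m+1) := by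
    field_simp; ring
  have h2m1 : (0:ℚ) < 2 ^ (m+1) := by positivity
  have hsplit : (2:ℚ)^a = 2^(m+1) * 2^(a-m-1) := by
    rw [← pow_add]; congr 1; omega
  have key : ∀ x y : ℚ, x / 2^a < y / 2^(m+1) ↔ x < y * 2^(a-m-1) := by
    intro x y
    rw [div_lt_div_iff₀ h2a h2m1, hsplit,
      show y * (2^(m+1) * 2^(a-m-1)) = (y * 2^(a-m-1)) * 2^(m+1) from by ring,
      mul_lt_mul_iff_left₀ h2m1]
  have key2 : ∀ x y : ℚ, y / 2^(m+1) < x / 2^a ↔ y * 2^(a-m-1) < x := by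
    intro x y
    rw [div_lt_div_iff₀ h2m1 h2a, hsplit,
      show y * (2^(m+1) * 2^(a-m-1)) = (y * 2^(a-m-1)) * 2^(m+1) from by ring,
      mul_lt_mul_iff_left₀ h2m1]
  rw [hcval, key] at hc2
  rw [hcval, key2] at hc1
  have hpN : p < (2*k+1) * 2^(a-m-1) := by
    have : (p:ℚ) < (((2*k+1) * 2^(a-m-1) : ℕ) : ℚ) := by push_cast; linarith
    exact_mod_cast this
  have hNp : (2*k+1) * 2^(a-m-1) < p + 1 := by
    have : ((((2*k+1) * 2^(a-m-1) : ℕ)) : ℚ) < (p:ℚ) + 1 := by push_cast; linarith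
    exact_mod_cast this
  omega

/-- if `B ∈ S(I)` is not a subinterval of the partition `I`, then
`B = A ∪ Ā` for some `A ∈ S(I)` with `A ≠ [0,1]`. -/
theorem statement_1 {n : ℕ} (I : SDPartition n) (B : ℚ × ℚ)
    (hB : B ∈ SIn I)
    (hnotsub : ¬ ∃ i : Fin n, B = (I.pts i.castSucc, I.pts i.succ)) :
    ∃ A ∈ SIn I, A ≠ ((0 : ℚ), (1 : ℚ)) ∧ B = sdJoin A (conjSD A) := by
  classical
  obtain ⟨⟨i, j, hij, hBeq⟩, hsd⟩ := hB
  subst hBeq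
  simp only at hsd
  set f := I.pts with hf
  set c : ℚ := (f i + f j) / 2 with hc
  have hfij : f i < f j := I.mono hij
  have hlc : f i < c := by rw [hc]; linarith
  have hcr : c < f j := by rw [hc]; linarith
  -- j.val > i.val + 1
  have hij2 : i.val + 1 < j.val := by
    by_contra hcon
    have hij1 : i.val + 1 = j.val := by
      have := hij
      rw [Fin.lt_def] at this
      omega
    have hin : i.val < n := by have := j.isLt; omega
    apply hnotsub
    refine ⟨⟨i.val, hin⟩, ?_⟩
    have e1 : (⟨i.val, hin⟩ : Fin n).castSucc = i := by
      ext; simp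
    have e2 : (⟨i.val, hin⟩ : Fin n).succ = j := by
      ext; simp [hij1]
    rw [e1, e2]
  -- the maximal breakpoint ≤ c
  set T : Finset (Fin (n+1)) := Finset.univ.filter (fun t => i ≤ t ∧ f t ≤ c) with hT
  have hiT : i ∈ T := by
    simp only [hT, Finset.mem_filter, Finset.mem_univ, true_and]
    exact ⟨le_refl i, le_of_lt hlc⟩
  have hTne : T.Nonempty := ⟨i, hiT⟩
  set t : Fin (n+1) := T.max' hTne with ht
  have htT : t ∈ T := T.max'_mem hTne
  obtain ⟨hit, htc⟩ : i ≤ t ∧ f t ≤ c := by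
    simpa only [hT, Finset.mem_filter, Finset.mem_univ, true_and] using htT
  have htj : t < j := by
    have : f t < f j := lt_of_le_of_lt htc hcr
    exact I.mono.lt_iff_lt.mp this
  have htn : t.val < n := by have := j.isLt; have := htj; rw [Fin.lt_def] at this; omega
  set tn : Fin n := ⟨t.val, htn⟩ with htn'
  have e1 : tn.castSucc = t := by ext; simp [htn']
  set t' : Fin (n+1) := tn.succ with ht'
  have ht'val : t'.val = t.val + 1 := rfl
  have htt' : t < t' := by rw [Fin.lt_def]; omega
  have hct' : c < f t' := by
    by_contra hcon
    push_neg at hcon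
    have ht'T : t' ∈ T := by
      simp only [hT, Finset.mem_filter, Finset.mem_univ, true_and]
      exact ⟨le_trans hit (le_of_lt htt'), hcon⟩
    have := T.le_max' t' ht'T
    exact absurd (lt_of_lt_of_le htt' this) (lt_irrefl t)
  have hsub : IsSD (f t) (f t') := by
    have := I.sd tn
    rwa [e1] at this
  have ht'j : t' ≤ j := by rw [Fin.le_def]; rw [Fin.lt_def] at htj; omega
  have hft' : f t' ≤ f j := I.mono.monotone ht'j
  have hfit : f i ≤ f t := I.mono.monotone hit
  have hstrict : f i < f t ∨ f t' < f j := by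
    rw [Fin.le_def] at hit
    rcases Nat.lt_or_ge i.val t.val with h | h
    · exact Or.inl (I.mono (by rw [Fin.lt_def]; exact h))
    · right
      apply I.mono
      rw [Fin.lt_def, ht'val]
      omega
  have hlen : f t' - f t < f j - f i := by rcases hstrict with h | h <;> linarith
  have hmid : f t = c := by
    rcases sd_no_cross hsd hsub hfit hft' hlen with h | h
    · rw [← hc] at h; linarith
    · exact le_antisymm htc h
  -- extract dyadic data of B
  obtain ⟨m, k, hk, hl, hr⟩ := hsd
  have hcval : c = (2*(k:ℚ)+1)/2^(m+1) := by
    rw [hc, hl, hr]; field_simp; ring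
  have hlval : f i = (2*(k:ℚ))/2^(m+1) := by
    rw [hl]; field_simp; ring
  have hj1 : f j ≤ 1 := by
    have := I.mono.monotone (Fin.le_last j)
    rwa [I.last] at this
  -- the left half A
  refine ⟨(f i, c), ⟨⟨i, t, ?_, by show (f i, c) = (f i, f t); rw [hmid]⟩, ?_⟩, ?_, ?_⟩
  · exact I.mono.lt_iff_lt.mp (show f i < f t by rw [hmid]; exact hlc)
  · exact ⟨m+1, 2*k, by push_cast [pow_succ]; omega,
      by push_cast at hlval ⊢; exact hlval, by push_cast at hcval ⊢; linarith [hcval]⟩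
  · intro h
    have h2 : c = 1 := congrArg Prod.snd h
    have : c < 1 := lt_of_lt_of_le hcr hj1
    linarith [h2]
  · have hleft : IsLeftSD (f i) c :=
      ⟨m+1, 2*k, by omega, by push_cast [pow_succ]; omega, even_two_mul k,
        by push_cast at hlval ⊢; exact hlval, by push_cast at hcval ⊢; linarith [hcval]⟩
    have hconj : conjSD (f i, c) = (c, 2*c - f i) := by
      simp only [conjSD]
      rw [if_pos hleft]
    rw [hconj]
    simp only [sdJoin]
    have h2c : 2*c - f i = f j := by rw [hc]; ring
    rw [h2c]
    ext
    · simp [min_eq_left (le_of_lt hlc)]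
    · simp [max_eq_right (le_of_lt hcr)]
end

section
/- Let I be a standard dyadic n-partition of [0,1]. Then the set S(I) has exactly 2n − 1 elements. -/
section SDAux

lemma isSD_lt' {x y : ℚ} (h : IsSD x y) : x < y := by
  obtain ⟨m, k, hk, hx, hy⟩ := h
  have h2 : (0:ℚ) < 2^m := by positivity
  rw [hx, hy, div_lt_div_iff_of_pos_right h2]
  nlinarith

lemma rep_nat' {m p a k : ℕ} (hpm : p ≤ m) (hk : Odd k) (h : (a:ℚ)/2^p = (k:ℚ)/2^m) :
    p = m ∧ a = k := by
  have h2p : (0:ℚ) < 2^p := by positivity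
  have h2m : (0:ℚ) < 2^m := by positivity
  have hq : (a:ℚ) * 2^m = (k:ℚ) * 2^p := by
    field_simp at h; linarith [h]
  have hn : a * 2^m = k * 2^p := by exact_mod_cast hq
  have hsplit : (2:ℕ)^m = 2^p * 2^(m-p) := by rw [← pow_add]; congr 1; omega
  have hd : a * 2^(m-p) = k := by
    have : a * 2^(m-p) * 2^p = k * 2^p := by rw [hsplit] at hn; linarith [hn]
    exact Nat.eq_of_mul_eq_mul_right (by positivity) this
  rcases Nat.eq_zero_or_pos (m - p) with h0 | h0
  · refine ⟨by omega, ?_⟩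
    rw [h0, pow_zero, mul_one] at hd; exact hd
  · exfalso
    have : Even k := by
      rw [← hd]
      exact (Nat.even_pow.mpr ⟨even_two, by omega⟩).mul_left a
    exact (Nat.not_even_iff_odd.mpr hk) this

lemma sd_ge_of_right' {x : ℚ} {m k : ℕ} (hk : Odd k) (h : IsSD x ((k:ℚ)/2^m)) :
    ((k:ℚ)-1)/2^m ≤ x := by
  obtain ⟨p, a, ha, hx, hy⟩ := h
  have key : m ≤ p := by
    by_contra hc
    push_neg at hc
    have := rep_nat' (le_of_lt hc) hk
      (show (((a+1:ℕ)):ℚ)/2^p = (k:ℚ)/2^m by push_cast; linarith [hy])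
    omega
  have hp : (1:ℚ)/2^p ≤ 1/2^m := by
    apply one_div_le_one_div_of_le (by positivity)
    exact pow_le_pow_right₀ (by norm_num) key
  have e1 : (a:ℚ)/2^p = ((a:ℚ)+1)/2^p - 1/2^p := by ring
  have e2 : ((k:ℚ)-1)/2^m = (k:ℚ)/2^m - 1/2^m := by ring
  rw [hx]
  linarith [hy]

lemma sd_le_of_left' {y : ℚ} {m k : ℕ} (hk : Odd k) (h : IsSD ((k:ℚ)/2^m) y) :
    y ≤ ((k:ℚ)+1)/2^m := by
  obtain ⟨p, a, ha, hx, hy⟩ := h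
  have key : m ≤ p := by
    by_contra hc
    push_neg at hc
    have := rep_nat' (le_of_lt hc) hk (hx.symm)
    omega
  have hp : (1:ℚ)/2^p ≤ 1/2^m := by
    apply one_div_le_one_div_of_le (by positivity)
    exact pow_le_pow_right₀ (by norm_num) key
  have e1 : ((a:ℚ)+1)/2^p = (a:ℚ)/2^p + 1/2^p := by ring
  have e2 : ((k:ℚ)+1)/2^m = (k:ℚ)/2^m + 1/2^m := by ring
  rw [hy]
  linarith [hx]

lemma mem_SIn' {n : ℕ} (I : SDPartition n) (A : ℚ × ℚ) :
    A ∈ SIn I ↔ (∃ i, I.pts i = A.1) ∧ (∃ j, I.pts j = A.2) ∧ IsSD A.1 A.2 := by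
  constructor
  · rintro ⟨⟨i, j, hij, hA⟩, hsd⟩
    exact ⟨⟨i, by rw [hA]⟩, ⟨j, by rw [hA]⟩, hsd⟩
  · rintro ⟨⟨i, hi⟩, ⟨j, hj⟩, hsd⟩
    refine ⟨⟨i, j, ?_, ?_⟩, hsd⟩
    · have := isSD_lt' hsd
      rw [← hi, ← hj] at this
      exact I.mono.lt_iff_lt.mp this
    · rw [hi, hj]

lemma SIn_finite' {n : ℕ} (I : SDPartition n) : (SIn I).Finite := by
  apply Set.Finite.subset ((Set.finite_range I.pts).prod (Set.finite_range I.pts))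
  rintro ⟨x, y⟩ ⟨⟨i, j, hij, hA⟩, -⟩
  rw [Prod.ext_iff] at hA
  exact ⟨⟨i, hA.1.symm⟩, ⟨j, hA.2.symm⟩⟩

def mergeAt {n : ℕ} (I : SDPartition (n+2)) (i : Fin (n+1))
    (hsd : IsSD (I.pts i.castSucc.castSucc) (I.pts i.succ.succ)) : SDPartition (n+1) where
  pts := I.pts ∘ (i.succ.castSucc : Fin (n+3)).succAbove
  first := by
    have h : (i.succ.castSucc : Fin (n+3)).succAbove 0 = 0 := by
      rw [Fin.succAbove_of_castSucc_lt]
      · exact Fin.castSucc_zero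
      · simp only [Fin.lt_def, Fin.coe_castSucc, Fin.val_succ, Fin.val_zero]; omega
    simp only [Function.comp_apply, h, I.first]
  last := by
    have h : (i.succ.castSucc : Fin (n+3)).succAbove (Fin.last (n+1)) = Fin.last (n+2) := by
      rw [Fin.succAbove_of_le_castSucc]
      · exact Fin.succ_last (n+1)
      · simp only [Fin.le_def, Fin.coe_castSucc, Fin.val_succ, Fin.val_last]; omega
    simp only [Function.comp_apply, h, I.last]
  mono := I.mono.comp (Fin.strictMono_succAbove _)
  sd := by
    intro q
    simp only [Function.comp_apply]
    rcases lt_trichotomy q.val i.val with h | h | h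
    · rw [Fin.succAbove_of_castSucc_lt _ _
          (by simp only [Fin.lt_def, Fin.coe_castSucc, Fin.val_succ, Fin.val_zero]; omega),
        Fin.succAbove_of_castSucc_lt _ _
          (by simp only [Fin.lt_def, Fin.coe_castSucc, Fin.val_succ, Fin.val_zero]; omega),
        ← Fin.succ_castSucc]
      exact I.sd q.castSucc
    · have hq : q = i := Fin.ext h
      subst hq
      rw [Fin.succAbove_of_castSucc_lt _ _
          (by simp only [Fin.lt_def, Fin.coe_castSucc, Fin.val_succ, Fin.val_zero]; omega),
        Fin.succAbove_of_le_castSucc _ _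
          (by simp only [Fin.le_def, Fin.coe_castSucc, Fin.val_succ, Fin.val_last]; omega)]
      exact hsd
    · rw [Fin.succAbove_of_le_castSucc _ _
          (by simp only [Fin.le_def, Fin.coe_castSucc, Fin.val_succ, Fin.val_last]; omega),
        Fin.succAbove_of_le_castSucc _ _
          (by simp only [Fin.le_def, Fin.coe_castSucc, Fin.val_succ, Fin.val_last]; omega),
        Fin.succ_castSucc]
      exact I.sd q.succ

lemma exists_caret {n : ℕ} (I : SDPartition (n+2)) :
    ∃ (i : Fin (n+1)) (m k : ℕ), 1 ≤ m ∧ Odd k ∧ k + 1 ≤ 2^m ∧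
      I.pts i.castSucc.castSucc = ((k:ℚ)-1)/2^m ∧
      I.pts i.succ.castSucc = (k:ℚ)/2^m ∧
      I.pts i.succ.succ = ((k:ℚ)+1)/2^m := by
  classical
  have hrep : ∀ u : Fin (n+2), ∃ mk : ℕ × ℕ, mk.2 < 2^mk.1 ∧
      I.pts u.castSucc = (mk.2 : ℚ)/2^mk.1 ∧ I.pts u.succ = ((mk.2 : ℚ)+1)/2^mk.1 := by
    intro u
    obtain ⟨m, k, h1, h2, h3⟩ := I.sd u
    exact ⟨(m, k), h1, h2, h3⟩
  choose g hg1 hg2 hg3 using hrep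
  obtain ⟨u, -, hu⟩ := Finset.exists_max_image (Finset.univ : Finset (Fin (n+2)))
    (fun u => (g u).1) ⟨0, Finset.mem_univ 0⟩
  rcases hgu : g u with ⟨m, k⟩
  have hkm : k < 2^m := by have := hg1 u; rw [hgu] at this; exact this
  have h2u : I.pts u.castSucc = (k:ℚ)/2^m := by have := hg2 u; rw [hgu] at this; exact this
  have h3u : I.pts u.succ = ((k:ℚ)+1)/2^m := by have := hg3 u; rw [hgu] at this; exact this
  have hmax : ∀ u', (g u').1 ≤ m := by
    intro u'
    have := hu u' (Finset.mem_univ u')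
    rw [hgu] at this
    exact this
  have hm1 : 1 ≤ m := by
    by_contra hc
    push_neg at hc
    interval_cases m
    · have hk0 : k = 0 := by omega
      subst hk0
      have e1 : I.pts u.castSucc = 0 := by rw [h2u]; norm_num
      have e2 : I.pts u.succ = 1 := by rw [h3u]; norm_num
      have h1 : u.castSucc = 0 := I.mono.injective (by rw [e1, I.first])
      have h2 : u.succ = Fin.last (n+2) := I.mono.injective (by rw [e2, I.last])
      have hv1 := congrArg Fin.val h1
      have hv2 := congrArg Fin.val h2
      simp only [Fin.coe_castSucc, Fin.val_succ, Fin.val_zero, Fin.val_last] at hv1 hv2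
      omega
  rcases Nat.even_or_odd k with hke | hko
  · -- k even: sibling on the right
    have hklt : k + 1 < 2^m := by
      rcases hke with ⟨r, hr⟩
      have : 2^m = 2 * 2^(m-1) := by rw [← pow_succ']; congr 1; omega
      omega
    have hune : u ≠ Fin.last (n+1) := by
      intro hul
      have h1 : I.pts u.succ = 1 := by rw [hul, Fin.succ_last]; exact I.last
      rw [h3u] at h1
      have h2m : (0:ℚ) < 2^m := by positivity
      rw [div_eq_one_iff_eq (ne_of_gt h2m)] at h1
      have h2 : (k:ℚ) + 1 = ((2^m : ℕ) : ℚ) := by push_cast; linarith [h1]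
      have : k + 1 = 2^m := by exact_mod_cast h2
      omega
    obtain ⟨i, hi⟩ := Fin.exists_castSucc_eq.mpr hune
    rcases hgi : g i.succ with ⟨p, a⟩
    have hap : a < 2^p := by have := hg1 i.succ; rw [hgi] at this; exact this
    have h2i : I.pts i.succ.castSucc = (a:ℚ)/2^p := by
      have := hg2 i.succ; rw [hgi] at this; exact this
    have h3i : I.pts i.succ.succ = ((a:ℚ)+1)/2^p := by
      have := hg3 i.succ; rw [hgi] at this; exact this
    have hpm : p ≤ m := by have := hmax i.succ; rw [hgi] at this; exact this
    have hshare : I.pts i.succ.castSucc = ((k:ℚ)+1)/2^m := by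
      rw [← Fin.succ_castSucc, hi]; exact h3u
    have heq : (a:ℚ)/2^p = (((k+1:ℕ)):ℚ)/2^m := by
      rw [← h2i, hshare]; push_cast; ring
    have hodd : Odd (k+1) := by rcases hke with ⟨r, hr⟩; exact ⟨r, by omega⟩
    obtain ⟨hpm', ha'⟩ := rep_nat' hpm hodd heq
    refine ⟨i, m, k+1, hm1, hodd, by omega, ?_, ?_, ?_⟩
    · rw [hi, h2u]; push_cast; ring
    · rw [hshare]; push_cast; ring
    · rw [h3i, ha', hpm']
  · -- k odd: sibling on the left
    have hk1 : 1 ≤ k := hko.pos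
    have hune : u ≠ 0 := by
      intro hul
      have h1 : I.pts u.castSucc = 0 := by rw [hul, Fin.castSucc_zero]; exact I.first
      rw [h2u] at h1
      have h2m : (0:ℚ) < 2^m := by positivity
      rw [div_eq_zero_iff] at h1
      have h2 : (k:ℚ) = 0 := by
        rcases h1 with h | h
        · exact h
        · exact absurd h (ne_of_gt h2m)
      have : k = 0 := by exact_mod_cast h2
      omega
    obtain ⟨i, hi⟩ := Fin.eq_succ_of_ne_zero hune
    rcases hgi : g i.castSucc with ⟨p, a⟩
    have hap : a < 2^p := by have := hg1 i.castSucc; rw [hgi] at this; exact this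
    have h2i : I.pts i.castSucc.castSucc = (a:ℚ)/2^p := by
      have := hg2 i.castSucc; rw [hgi] at this; exact this
    have h3i : I.pts i.castSucc.succ = ((a:ℚ)+1)/2^p := by
      have := hg3 i.castSucc; rw [hgi] at this; exact this
    have hpm : p ≤ m := by have := hmax i.castSucc; rw [hgi] at this; exact this
    have hshare : I.pts i.castSucc.succ = (k:ℚ)/2^m := by
      rw [Fin.succ_castSucc, ← hi]; exact h2u
    have heq : (((a+1:ℕ)):ℚ)/2^p = ((k:ℕ):ℚ)/2^m := by
      rw [← hshare, h3i]; push_cast; ring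
    obtain ⟨hpm', ha'⟩ := rep_nat' hpm hko heq
    refine ⟨i, m, k, hm1, hko, by omega, ?_, ?_, ?_⟩
    · rw [h2i, hpm']
      have hcast : (a:ℚ) = (k:ℚ) - 1 := by
        have h2 : ((a:ℚ)+1) = ((a+1:ℕ):ℚ) := by push_cast; ring
        have h3 : ((a+1:ℕ):ℚ) = (k:ℚ) := by exact_mod_cast congrArg Nat.cast ha'
        linarith
      rw [hcast]
    · rw [← Fin.succ_castSucc]; exact hshare
    · rw [← hi]; exact h3u


end SDAux

/-- for a standard dyadic `n`-partition `I`, the set `S(I)` has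
exactly `2n - 1` elements. -/


theorem statement_2 {n : ℕ} (I : SDPartition n) :
    (SIn I).ncard = 2 * n - 1 := by
  suffices h : ∀ N, ∀ J : SDPartition N, (SIn J).ncard = 2 * N - 1 from h n I
  intro N
  induction N with
  | zero =>
    intro J
    exfalso
    have h0 := J.first
    have h1 := J.last
    rw [show (Fin.last 0) = 0 from rfl, h0] at h1
    norm_num at h1
  | succ k ih =>
    intro J
    cases k with
    | zero =>
      -- base case: the partition is 0 < 1
      have hset : SIn J = {((0:ℚ), (1:ℚ))} := by
        ext A
        simp only [Set.mem_singleton_iff]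
        constructor
        · rintro ⟨⟨i, j, hij, hA⟩, -⟩
          have hij' : i.val < j.val := hij
          have hi2 := i.isLt
          have hj2 := j.isLt
          have hi0 : i = 0 := Fin.ext (by simp only [Fin.val_zero]; omega)
          have hj1' : j = Fin.last 1 := Fin.ext (by simp only [Fin.val_last]; omega)
          rw [hA, hi0, hj1', J.first, J.last]
        · rintro rfl
          refine ⟨⟨0, Fin.last 1, by decide, ?_⟩, ⟨0, 0, by norm_num⟩⟩
          rw [J.first, J.last]
      rw [hset, Set.ncard_singleton]
    | succ j =>
      obtain ⟨i, m, k, hm1, hodd, hk2m, ha, hb, hc⟩ := exists_caret J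
      obtain ⟨r, hr⟩ := hodd
      have hpow : (2:ℚ)^m = 2*2^(m-1) := by rw [← pow_succ']; congr 1; omega
      have hpown : (2:ℕ)^m = 2*2^(m-1) := by rw [← pow_succ']; congr 1; omega
      have hmerge : IsSD (J.pts i.castSucc.castSucc) (J.pts i.succ.succ) := by
        refine ⟨m-1, r, by omega, ?_, ?_⟩
        · rw [ha, hr, hpow]; push_cast; field_simp; ring
        · rw [hc, hr, hpow]; push_cast; field_simp; ring
      set J' := mergeAt J i hmerge with hJ'
      -- range of the merged partition's points
      have hrange' : ∀ x : ℚ, (∃ q, J'.pts q = x) ↔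
          (∃ q, J.pts q = x) ∧ x ≠ J.pts i.succ.castSucc := by
        intro x
        constructor
        · rintro ⟨q, rfl⟩
          refine ⟨⟨(i.succ.castSucc : Fin (j+3)).succAbove q, rfl⟩, ?_⟩
          intro hEq
          exact Fin.succAbove_ne _ q (J.mono.injective hEq)
        · rintro ⟨⟨q, rfl⟩, hne⟩
          have hqt : q ≠ i.succ.castSucc := fun h => hne (by rw [h])
          have hmem : q ∈ Set.range ((i.succ.castSucc : Fin (j+3)).succAbove) := by
            rw [Fin.range_succAbove]
            simpa using hqt
          obtain ⟨q', hq'⟩ := hmem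
          exact ⟨q', by rw [← hq']; rfl⟩
      have hSIn' : ∀ A, A ∈ SIn J' ↔
          A ∈ SIn J ∧ A.1 ≠ J.pts i.succ.castSucc ∧ A.2 ≠ J.pts i.succ.castSucc := by
        intro A
        rw [mem_SIn', mem_SIn', hrange' A.1, hrange' A.2]
        tauto
      -- identification of the two intervals having the removed point as endpoint
      have claim1 : ∀ A ∈ SIn J, A.2 = J.pts i.succ.castSucc →
          A = (J.pts i.castSucc.castSucc, J.pts i.succ.castSucc) := by
        rintro ⟨x, y⟩ hA h2
        simp only at h2
        subst h2
        obtain ⟨⟨qx, hqx⟩, -, hsd⟩ := (mem_SIn' J _).mp hA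
        simp only at hqx hsd
        rw [hb] at hsd
        have hgex := sd_ge_of_right' ⟨r, hr⟩ hsd
        have hlt := isSD_lt' hsd
        rw [← ha] at hgex
        rw [← hb] at hlt
        have hle : i.castSucc.castSucc ≤ qx := J.mono.le_iff_le.mp (by rw [hqx]; exact hgex)
        have hlt2 : qx < i.succ.castSucc := J.mono.lt_iff_lt.mp (by rw [hqx]; exact hlt)
        have hq : qx = i.castSucc.castSucc := by
          apply Fin.ext
          simp only [Fin.le_def, Fin.lt_def, Fin.coe_castSucc, Fin.val_succ] at hle hlt2 ⊢
          omega
        rw [← hqx, hq]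
      have claim2 : ∀ A ∈ SIn J, A.1 = J.pts i.succ.castSucc →
          A = (J.pts i.succ.castSucc, J.pts i.succ.succ) := by
        rintro ⟨x, y⟩ hA h1
        simp only at h1
        subst h1
        obtain ⟨-, ⟨qy, hqy⟩, hsd⟩ := (mem_SIn' J _).mp hA
        simp only at hqy hsd
        rw [hb] at hsd
        have hley := sd_le_of_left' ⟨r, hr⟩ hsd
        have hlt := isSD_lt' hsd
        rw [← hc] at hley
        rw [← hb] at hlt
        have hle : qy ≤ i.succ.succ := J.mono.le_iff_le.mp (by rw [hqy]; exact hley)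
        have hlt2 : i.succ.castSucc < qy := J.mono.lt_iff_lt.mp (by rw [hqy]; exact hlt)
        have hq : qy = i.succ.succ := by
          apply Fin.ext
          simp only [Fin.le_def, Fin.lt_def, Fin.coe_castSucc, Fin.val_succ] at hle hlt2 ⊢
          omega
        rw [← hqy, hq]
      have hsplit : SIn J = insert (J.pts i.castSucc.castSucc, J.pts i.succ.castSucc)
          (insert (J.pts i.succ.castSucc, J.pts i.succ.succ) (SIn J')) := by
        ext A
        simp only [Set.mem_insert_iff]
        constructor
        · intro hA
          by_cases h2 : A.2 = J.pts i.succ.castSucc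
          · left; exact claim1 A hA h2
          · by_cases h1 : A.1 = J.pts i.succ.castSucc
            · right; left; exact claim2 A hA h1
            · right; right; rw [hSIn']; exact ⟨hA, h1, h2⟩
        · rintro (rfl | rfl | hA)
          · rw [mem_SIn']
            refine ⟨⟨_, rfl⟩, ⟨_, rfl⟩, ?_⟩
            simp only
            rw [ha, hb]
            exact ⟨m, 2*r, by omega, by push_cast [hr]; ring, by push_cast [hr]; ring⟩
          · rw [mem_SIn']
            refine ⟨⟨_, rfl⟩, ⟨_, rfl⟩, ?_⟩
            simp only
            rw [hb, hc]
            exact ⟨m, k, by omega, rfl, rfl⟩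
          · rw [hSIn'] at hA; exact hA.1
      have hfin' : (SIn J').Finite := SIn_finite' J'
      have hab : J.pts i.castSucc.castSucc ≠ J.pts i.succ.castSucc :=
        ne_of_lt (J.mono (by
          simp only [Fin.lt_def, Fin.coe_castSucc, Fin.val_succ]; omega))
      have hne1 : (J.pts i.castSucc.castSucc, J.pts i.succ.castSucc) ∉
          insert (J.pts i.succ.castSucc, J.pts i.succ.succ) (SIn J') := by
        intro hmem
        rcases hmem with heq | hmem
        · rw [Prod.ext_iff] at heq
          exact hab heq.1
        · rw [hSIn'] at hmem
          exact hmem.2.2 rfl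
      have hne2 : (J.pts i.succ.castSucc, J.pts i.succ.succ) ∉ SIn J' := by
        intro hmem
        rw [hSIn'] at hmem
        exact hmem.2.1 rfl
      rw [hsplit, Set.ncard_insert_of_notMem hne1 (hfin'.insert _),
        Set.ncard_insert_of_notMem hne2 hfin', ih J']
      omega
end

section
/- Let I be a standard dyadic partition of [0,1]. The restriction of the midpoint map m to S(I) is a bijection from S(I) onto E(I). -/
lemma odd_mul_pow_inj {a b m m' : ℕ} (ha : Odd a) (hb : Odd b)
    (h : a * 2 ^ m' = b * 2 ^ m) : m = m' ∧ a = b := by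
  rcases le_total m m' with hle | hle
  · obtain ⟨d, rfl⟩ := Nat.exists_eq_add_of_le hle
    have h2 : a * 2 ^ d = b := by
      have hp : (0:ℕ) < 2 ^ m := pow_pos (by norm_num) m
      have : (a * 2 ^ d) * 2 ^ m = b * 2 ^ m := by rw [← h, pow_add]; ring
      exact Nat.eq_of_mul_eq_mul_right hp this
    rcases Nat.eq_zero_or_pos d with rfl | hd
    · simp at h2; exact ⟨rfl, h2⟩
    · exfalso
      have h2dvd : 2 ∣ b := h2 ▸ Dvd.dvd.mul_left (dvd_pow_self 2 hd.ne') a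
      have := Nat.odd_iff.mp hb
      omega
  · obtain ⟨d, rfl⟩ := Nat.exists_eq_add_of_le hle
    have h2 : b * 2 ^ d = a := by
      have hp : (0:ℕ) < 2 ^ m' := pow_pos (by norm_num) m'
      have : (b * 2 ^ d) * 2 ^ m' = a * 2 ^ m' := by rw [h, pow_add]; ring
      exact Nat.eq_of_mul_eq_mul_right hp this
    rcases Nat.eq_zero_or_pos d with rfl | hd
    · simp at h2; exact ⟨rfl, h2.symm⟩
    · exfalso
      have h2dvd : 2 ∣ a := h2 ▸ Dvd.dvd.mul_left (dvd_pow_self 2 hd.ne') b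
      have := Nat.odd_iff.mp ha
      omega

lemma sd_mid_eq {m k : ℕ} :
    ((k:ℚ)/2^m + ((k:ℚ)+1)/2^m) / 2 = (2*(k:ℚ)+1)/2^(m+1) := by
  rw [pow_succ]
  field_simp
  ring

lemma mid_inj {l r l' r' : ℚ} (h : IsSD l r) (h' : IsSD l' r')
    (hm : (l + r)/2 = (l' + r')/2) : l = l' ∧ r = r' := by
  obtain ⟨m, k, hk, rfl, rfl⟩ := h
  obtain ⟨m', k', hk', rfl, rfl⟩ := h'
  rw [sd_mid_eq, sd_mid_eq, div_eq_div_iff (by positivity) (by positivity)] at hm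
  have hN : (2*k+1) * 2^(m'+1) = (2*k'+1) * 2^(m+1) := by exact_mod_cast hm
  obtain ⟨h1, h2⟩ := odd_mul_pow_inj ⟨k, by ring⟩ ⟨k', by ring⟩ hN
  have : m = m' := by omega
  subst this
  have : k = k' := by omega
  subst this
  exact ⟨rfl, rfl⟩

/-- Descent lemma, left side. -/
lemma descLeft {l r : ℚ} {m k : ℕ} (h : IsSD l r) (hk : k < 2^m)
    (h1 : (k:ℚ)/2^m < r) (h2 : r ≤ (2*(k:ℚ)+1)/2^(m+1)) :
    (k:ℚ)/2^m ≤ l := by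
  obtain ⟨s, j, hj, rfl, rfl⟩ := h
  rw [div_lt_div_iff₀ (by positivity) (by positivity)] at h1
  rw [div_le_div_iff₀ (by positivity) (by positivity)] at h2
  have hn1 : k * 2^s < (j+1) * 2^m := by exact_mod_cast h1
  have hn2 : (j+1) * 2^(m+1) ≤ (2*k+1) * 2^s := by exact_mod_cast h2
  rcases le_or_gt s m with hs | hs
  · exfalso
    obtain ⟨d, rfl⟩ := Nat.exists_eq_add_of_le hs
    rw [pow_add] at hn1
    rw [pow_succ, pow_add] at hn2
    have hp : (0:ℕ) < 2 ^ s := pow_pos (by norm_num) s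
    have e1 : k < (j+1) * 2^d := by
      have : k * 2^s < ((j+1) * 2^d) * 2^s := by nlinarith [hn1]
      exact Nat.lt_of_mul_lt_mul_right this
    have e2 : (j+1) * 2^d * 2 ≤ 2*k+1 := by
      have : ((j+1) * 2^d * 2) * 2^s ≤ (2*k+1) * 2^s := by nlinarith [hn2]
      exact Nat.le_of_mul_le_mul_right this hp
    omega
  · obtain ⟨d, rfl⟩ := Nat.exists_eq_add_of_le hs.le
    rw [pow_add] at hn1
    have hp : (0:ℕ) < 2 ^ m := pow_pos (by norm_num) m
    have e1 : k * 2^d ≤ j := by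
      have : (k * 2^d) * 2^m < (j+1) * 2^m := by nlinarith [hn1]
      have := Nat.lt_of_mul_lt_mul_right this
      omega
    rw [div_le_div_iff₀ (by positivity) (by positivity)]
    have : (k * 2^d : ℚ) ≤ j := by exact_mod_cast e1
    have h2m : (0:ℚ) < 2^m := by positivity
    calc (k:ℚ) * 2^(m+d) = (k * 2^d : ℚ) * 2^m := by rw [pow_add]; ring
    _ ≤ (j:ℚ) * 2^m := by nlinarith

/-- Descent lemma, right side. -/
lemma descRight {l r : ℚ} {m k : ℕ} (h : IsSD l r) (hk : k < 2^m)
    (h1 : (2*(k:ℚ)+1)/2^(m+1) ≤ l) (h2 : l < ((k:ℚ)+1)/2^m) :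
    r ≤ ((k:ℚ)+1)/2^m := by
  obtain ⟨s, j, hj, rfl, rfl⟩ := h
  rw [div_le_div_iff₀ (by positivity) (by positivity)] at h1
  rw [div_lt_div_iff₀ (by positivity) (by positivity)] at h2
  have hn1 : (2*k+1) * 2^s ≤ j * 2^(m+1) := by exact_mod_cast h1
  have hn2 : j * 2^m < (k+1) * 2^s := by exact_mod_cast h2
  rcases le_or_gt s m with hs | hs
  · exfalso
    obtain ⟨d, rfl⟩ := Nat.exists_eq_add_of_le hs
    rw [pow_add] at hn2
    rw [pow_succ, pow_add] at hn1
    have hp : (0:ℕ) < 2 ^ s := pow_pos (by norm_num) s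
    have e1 : j * 2^d < k + 1 := by
      have : (j * 2^d) * 2^s < (k+1) * 2^s := by nlinarith [hn2]
      exact Nat.lt_of_mul_lt_mul_right this
    have e2 : 2*k+1 ≤ j * 2^d * 2 := by
      have : (2*k+1) * 2^s ≤ (j * 2^d * 2) * 2^s := by nlinarith [hn1]
      exact Nat.le_of_mul_le_mul_right this hp
    omega
  · obtain ⟨d, rfl⟩ := Nat.exists_eq_add_of_le hs.le
    rw [pow_add] at hn2
    have hp : (0:ℕ) < 2 ^ m := pow_pos (by norm_num) m
    have e1 : j < (k+1) * 2^d := by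
      have : j * 2^m < ((k+1) * 2^d) * 2^m := by nlinarith [hn2]
      exact Nat.lt_of_mul_lt_mul_right this
    have e1' : j + 1 ≤ (k+1) * 2^d := e1
    rw [div_le_div_iff₀ (by positivity) (by positivity)]
    have : ((j:ℚ)+1) ≤ ((k:ℚ)+1) * 2^d := by exact_mod_cast e1'
    have h2m : (0:ℚ) < 2^m := by positivity
    calc ((j:ℚ)+1) * 2^m ≤ (((k:ℚ)+1) * 2^d) * 2^m := by nlinarith
    _ = ((k:ℚ)+1) * 2^(m+d) := by rw [pow_add]; ring

/-- Nested lemma: an s.d. interval inside another, containing its midpoint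
strictly, must be equal to it. -/
lemma sd_nested {l r l' r' : ℚ} (h : IsSD l r) (h' : IsSD l' r')
    (hll : l ≤ l') (hrr : r' ≤ r) (h1 : l' < (l + r)/2) (h2 : (l + r)/2 < r') :
    l' = l ∧ r' = r := by
  obtain ⟨m, k, hk, rfl, rfl⟩ := h
  obtain ⟨s, j, hj, rfl, rfl⟩ := h'
  rw [sd_mid_eq] at h1 h2
  rcases le_or_gt s m with hs | hs
  · -- lengths force equality
    have hlen : (1:ℚ)/2^m ≤ 1/2^s := by
      apply div_le_div_of_nonneg_left (by norm_num) (by positivity)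
      exact pow_le_pow_right₀ (by norm_num) hs
    have e1 : ((k:ℚ)+1)/2^m - (k:ℚ)/2^m = 1/2^m := by ring
    have e2 : ((j:ℚ)+1)/2^s - (j:ℚ)/2^s = 1/2^s := by ring
    constructor <;> linarith
  · exfalso
    rw [div_lt_div_iff₀ (by positivity) (by positivity)] at h1 h2
    have hn1 : j * 2^(m+1) < (2*k+1) * 2^s := by exact_mod_cast h1
    have hn2 : (2*k+1) * 2^s < (j+1) * 2^(m+1) := by exact_mod_cast h2
    have hs' : m + 1 ≤ s := hs
    obtain ⟨d, rfl⟩ := Nat.exists_eq_add_of_le hs'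
    have hp : (0:ℕ) < 2 ^ (m+1) := pow_pos (by norm_num) _
    rw [pow_add 2 (m+1) d] at hn1 hn2
    have e1 : j < (2*k+1) * 2^d := by
      have : j * 2^(m+1) < ((2*k+1) * 2^d) * 2^(m+1) := by nlinarith [hn1]
      exact Nat.lt_of_mul_lt_mul_right this
    have e2 : (2*k+1) * 2^d < j + 1 := by
      have : ((2*k+1) * 2^d) * 2^(m+1) < (j+1) * 2^(m+1) := by nlinarith [hn2]
      exact Nat.lt_of_mul_lt_mul_right this
    omega

/-- Every dyadic rational `(j+1)/2^s` strictly between 0 and 1 can be written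
as `(2k+1)/2^(m+1)` with `k < 2^m`. -/
lemma exists_odd_rep {j s : ℕ} (h1 : j + 1 < 2^s) :
    ∃ m k : ℕ, k < 2^m ∧ ((j:ℚ)+1)/2^s = (2*(k:ℚ)+1)/2^(m+1) := by
  obtain ⟨e, o, ho, heq⟩ := Nat.exists_eq_two_pow_mul_odd (n := j+1) (by omega)
  obtain ⟨k, rfl⟩ := ho
  have hes : e < s := by
    by_contra hc
    push_neg at hc
    have : 2^s ≤ 2^e := Nat.pow_le_pow_right (by norm_num) hc
    nlinarith [heq, h1]
  obtain ⟨m1, rfl⟩ := Nat.exists_eq_add_of_lt hes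
  refine ⟨m1, k, ?_, ?_⟩
  · -- 2^e * (2k+1) < 2^(e+m1+1) so 2k+1 < 2^(m1+1), k < 2^m1
    have : 2^e * (2*k+1) < 2^(e + m1 + 1) := heq ▸ h1
    rw [show e + m1 + 1 = e + (m1+1) from by ring, pow_add] at this
    have h2 : 2*k+1 < 2^(m1+1) := by
      have hp : (0:ℕ) < 2 ^ e := pow_pos (by norm_num) _
      exact lt_of_mul_lt_mul_left this (le_of_lt hp)
    rw [pow_succ] at h2
    omega
  · have hq : ((j:ℚ)+1) = 2^e * (2*(k:ℚ)+1) := by exact_mod_cast heq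
    rw [hq]
    rw [show e + m1 + 1 = e + (m1+1) from by ring, pow_add]
    rw [div_eq_div_iff (by positivity) (by positivity)]
    ring

lemma mid_gt {m k : ℕ} : (k:ℚ)/2^m < (2*(k:ℚ)+1)/2^(m+1) := by
  rw [div_lt_div_iff₀ (by positivity) (by positivity), pow_succ]
  have : (0:ℚ) < 2^m := by positivity
  nlinarith

lemma mid_lt {m k : ℕ} : (2*(k:ℚ)+1)/2^(m+1) < ((k:ℚ)+1)/2^m := by
  rw [div_lt_div_iff₀ (by positivity) (by positivity), pow_succ]
  have : (0:ℚ) < 2^m := by positivity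
  nlinarith
/-- for a standard dyadic partition `I`, the midpoint map restricts
to a bijection from `S(I)` onto `E(I)`. -/
theorem statement_5 {n : ℕ} (I : SDPartition n) :
    Set.BijOn midQ (SIn I) (EIn I) := by
  classical
  have h0 : ∀ t, 0 ≤ I.pts t := fun t => I.first ▸ I.mono.monotone (Fin.zero_le t)
  have h1 : ∀ t, I.pts t ≤ 1 := fun t => I.last ▸ I.mono.monotone (Fin.le_last t)
  refine ⟨?_, ?_, ?_⟩
  · -- MapsTo
    rintro A ⟨⟨i, j, hij, rfl⟩, hsd⟩
    have hmono := I.mono hij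
    have hci : I.pts i < midQ (I.pts i, I.pts j) ∧ midQ (I.pts i, I.pts j) < I.pts j := by
      constructor <;> (simp only [midQ]; linarith)
    set c := midQ (I.pts i, I.pts j) with hc
    by_cases hbrk : ∃ t, I.pts t = c
    · right
      refine ⟨hbrk, ?_, ?_⟩
      · have := h0 i; intro h; rw [h] at hci; linarith [hci.1]
      · have := h1 j; intro h; rw [h] at hci; linarith [hci.2]
    · left
      push_neg at hbrk
      let S : Finset (Fin (n+1)) := Finset.univ.filter (fun t => I.pts t < c)
      have hSne : S.Nonempty := ⟨i, by simp [S, hci.1]⟩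
      set p := S.max' hSne with hpdef
      have hpS : I.pts p < c := by
        have := S.max'_mem hSne; simpa [S] using this
      have hpmax : ∀ t, I.pts t < c → t ≤ p := fun t ht => S.le_max' t (by simp [S, ht])
      have hplt : (p : ℕ) < n := by
        by_contra hcn
        push_neg at hcn
        have hpl : p = Fin.last n := Fin.ext (le_antisymm (Nat.lt_succ_iff.mp p.isLt) hcn)
        rw [hpl, I.last] at hpS
        have := h1 j
        linarith [hci.2]
      set pp : Fin n := ⟨(p : ℕ), hplt⟩ with hppdef
      have hcastp : pp.castSucc = p := Fin.ext rfl
      have hnext : c < I.pts pp.succ := by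
        rcases lt_trichotomy (I.pts pp.succ) c with h | h | h
        · exfalso
          have hle := hpmax pp.succ h
          simp only [Fin.le_def, Fin.val_succ, hppdef, Fin.val_mk] at hle
          omega
        · exact absurd h (hbrk _)
        · exact h
      have hip : i ≤ p := hpmax i hci.1
      have hpj : pp.succ ≤ j := by
        have hjp : (p : ℕ) < (j : ℕ) := by
          by_contra hcn
          push_neg at hcn
          have : j ≤ p := by rw [Fin.le_def]; omega
          have := I.mono.monotone this
          linarith [hci.2]
        simp only [Fin.le_def, Fin.val_succ, hppdef, Fin.val_mk]
        omega
      have hll : I.pts i ≤ I.pts pp.castSucc := by rw [hcastp]; exact I.mono.monotone hip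
      have hrr : I.pts pp.succ ≤ I.pts j := I.mono.monotone hpj
      have hkey := sd_nested hsd (I.sd pp)
        (by simpa using hll) (by simpa using hrr)
        (by rw [hcastp]; exact hpS) hnext
      refine ⟨pp, ?_⟩
      simp only [midQ]
      rw [hkey.1, hkey.2]
      exact hc
  · -- InjOn
    rintro A ⟨-, hA⟩ B ⟨-, hB⟩ hm
    have := mid_inj hA hB (by simpa [midQ] using hm)
    exact Prod.ext this.1 this.2
  · -- SurjOn
    rintro c (⟨ii, rfl⟩ | ⟨⟨i, rfl⟩, hc0, hc1⟩)
    · exact ⟨(I.pts ii.castSucc, I.pts ii.succ),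
        ⟨⟨ii.castSucc, ii.succ, Fin.castSucc_lt_succ, rfl⟩, I.sd ii⟩, rfl⟩
    · -- interior breakpoint case
      have hi0 : i ≠ 0 := by
        intro h; rw [h, I.first] at hc0; exact hc0 rfl
      have hival : 1 ≤ (i : ℕ) := by
        rcases Nat.eq_zero_or_pos (i : ℕ) with h | h
        · exact absurd (Fin.ext h) hi0
        · exact h
      have hiltn : (i : ℕ) - 1 < n := by
        have := i.isLt; omega
      set ii : Fin n := ⟨(i : ℕ) - 1, hiltn⟩ with hiidef
      have hiis : ii.succ = i := Fin.ext (by simp only [Fin.val_succ, hiidef, Fin.val_mk]; omega)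
      obtain ⟨s, j, hj, -, hr⟩ := I.sd ii
      rw [hiis] at hr
      have hilt1 : I.pts i < 1 := lt_of_le_of_ne (h1 i) hc1
      have hjlt : j + 1 < 2 ^ s := by
        rw [hr, div_lt_one (by positivity)] at hilt1
        exact_mod_cast hilt1
      obtain ⟨m, k, hk, hrep⟩ := exists_odd_rep hjlt
      have hceq : I.pts i = (2*(k:ℚ)+1)/2^(m+1) := by rw [hr, hrep]
      have hgt : (k:ℚ)/2^m < I.pts i := hceq ▸ mid_gt
      have hlt : I.pts i < ((k:ℚ)+1)/2^m := hceq ▸ mid_lt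
      -- left endpoint is a breakpoint
      let SL : Finset (Fin (n+1)) := Finset.univ.filter (fun t => I.pts t ≤ (k:ℚ)/2^m)
      have hSLne : SL.Nonempty := ⟨0, by simp [SL, I.first]; positivity⟩
      set p := SL.max' hSLne with hpdef
      have hpS : I.pts p ≤ (k:ℚ)/2^m := by
        have := SL.max'_mem hSLne; simpa [SL] using this
      have hpmax : ∀ t, I.pts t ≤ (k:ℚ)/2^m → t ≤ p := fun t ht => SL.le_max' t (by simp [SL, ht])
      have hpeq : I.pts p = (k:ℚ)/2^m := by
        by_contra hne
        have hplt' : I.pts p < (k:ℚ)/2^m := lt_of_le_of_ne hpS hne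
        have hpi : p < i := by
          rw [← I.mono.lt_iff_lt]; linarith
        have hpltn : (p : ℕ) < n := by
          have := i.isLt; rw [Fin.lt_def] at hpi; omega
        set pp : Fin n := ⟨(p : ℕ), hpltn⟩ with hppdef
        have hnext : (k:ℚ)/2^m < I.pts pp.succ := by
          by_contra hcn
          push_neg at hcn
          have := hpmax pp.succ hcn
          simp only [Fin.le_def, Fin.val_succ, hppdef, Fin.val_mk] at this
          omega
        have hsucci : pp.succ ≤ i := by
          rw [Fin.lt_def] at hpi
          simp only [Fin.le_def, Fin.val_succ, hppdef, Fin.val_mk]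
          omega
        have hub : I.pts pp.succ ≤ (2*(k:ℚ)+1)/2^(m+1) := by
          rw [← hceq]; exact I.mono.monotone hsucci
        have := descLeft (I.sd pp) hk hnext hub
        have hpppp : pp.castSucc = p := Fin.ext rfl
        rw [hpppp] at this
        linarith
      -- right endpoint is a breakpoint
      let SR : Finset (Fin (n+1)) := Finset.univ.filter (fun t => ((k:ℚ)+1)/2^m ≤ I.pts t)
      have hSRne : SR.Nonempty := by
        refine ⟨Fin.last n, ?_⟩
        simp only [SR, Finset.mem_filter, Finset.mem_univ, true_and, I.last]
        rw [div_le_one (by positivity)]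
        have : (k:ℚ) + 1 ≤ (2:ℚ)^m := by exact_mod_cast hk
        linarith
      set q := SR.min' hSRne with hqdef
      have hqS : ((k:ℚ)+1)/2^m ≤ I.pts q := by
        have := SR.min'_mem hSRne; simpa [SR] using this
      have hqmin : ∀ t, ((k:ℚ)+1)/2^m ≤ I.pts t → q ≤ t := fun t ht => SR.min'_le t (by simp [SR, ht])
      have hqeq : I.pts q = ((k:ℚ)+1)/2^m := by
        by_contra hne
        have hqgt : ((k:ℚ)+1)/2^m < I.pts q := lt_of_le_of_ne hqS (Ne.symm hne)
        have hiq : i < q := by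
          rw [← I.mono.lt_iff_lt]; linarith
        have hq1 : 1 ≤ (q : ℕ) := by
          rw [Fin.lt_def] at hiq; omega
        have hqltn : (q : ℕ) - 1 < n := by
          have := q.isLt; omega
        set qq : Fin n := ⟨(q : ℕ) - 1, hqltn⟩ with hqqdef
        have hqqs : qq.succ = q := Fin.ext (by simp only [Fin.val_succ, hqqdef, Fin.val_mk]; omega)
        have hprev : I.pts qq.castSucc < ((k:ℚ)+1)/2^m := by
          by_contra hcn
          push_neg at hcn
          have := hqmin qq.castSucc hcn
          simp only [Fin.le_def, Fin.coe_castSucc, hqqdef, Fin.val_mk] at this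
          omega
        have hiqq : i ≤ qq.castSucc := by
          rw [Fin.lt_def] at hiq
          simp only [Fin.le_def, Fin.coe_castSucc, hqqdef, Fin.val_mk]
          omega
        have hlb : (2*(k:ℚ)+1)/2^(m+1) ≤ I.pts qq.castSucc := by
          rw [← hceq]; exact I.mono.monotone hiqq
        have := descRight (I.sd qq) hk hlb hprev
        rw [hqqs] at this
        linarith
      -- assemble
      have hpq : p < q := by
        rw [← I.mono.lt_iff_lt, hpeq, hqeq]
        rw [div_lt_div_iff₀ (by positivity) (by positivity)]
        have : (0:ℚ) < 2^m := by positivity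
        nlinarith
      refine ⟨(I.pts p, I.pts q), ⟨⟨p, q, hpq, rfl⟩, ⟨m, k, hk, hpeq, hqeq⟩⟩, ?_⟩
      simp only [midQ]
      rw [hpeq, hqeq, sd_mid_eq, ← hceq]
end
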